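/- With w = (m, m−1, …, 2, 1̄)(n, n−1, …, m+1 overlined) in W = G(2,2,n) and t the transposition (i,j) with 1 ≤ i ≤ m < j ≤ n, the product w·t is represented by the single cycle (n, n−1, …, j+1, i, i−1, …, 1̄, m, m−1, …, i+1, j, j−1, …, m+1 overlined); in particular ℓ_T(w·t) = n − 1 = ℓ_T(w) − 1. -/

import Mathlib

open Matrix BigOperators

/-- The reflection of `G(2,2,n)` exchanging `e_i` and `e_j` (1-based indices `i, j`)
with sign `ε`: it sends `e_i ↦ ε • e_j`, `e_j ↦ ε • e_i` and fixes the other basis vectors. -/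
def reflMat (n i j : ℕ) (ε : ℝ) : Matrix (Fin n) (Fin n) ℝ :=
  Matrix.of fun k l =>
    if ((k : ℕ) + 1 = i ∧ (l : ℕ) + 1 = j) ∨ ((k : ℕ) + 1 = j ∧ (l : ℕ) + 1 = i) then ε
    else if k = l ∧ (k : ℕ) + 1 ≠ i ∧ (k : ℕ) + 1 ≠ j then 1
    else 0

/-- The set of reflections of `G(2,2,n)`: the matrices `(i,j)` and `(ī,j̄)` for `1 ≤ i ≠ j ≤ n`. -/
def ReflSet (n : ℕ) : Set (Matrix (Fin n) (Fin n) ℝ) :=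
  {M | ∃ i j : ℕ, 1 ≤ i ∧ i < j ∧ j ≤ n ∧ (M = reflMat n i j 1 ∨ M = reflMat n i j (-1))}

/-- Reflection length: the minimal number of reflections whose product is `M`. -/
noncomputable def reflLen (n : ℕ) (M : Matrix (Fin n) (Fin n) ℝ) : ℕ :=
  sInf {k : ℕ | ∃ L : List (Matrix (Fin n) (Fin n) ℝ),
    L.length = k ∧ (∀ t ∈ L, t ∈ ReflSet n) ∧ L.prod = M}

/-- Membership in `W = G(2,2,n)`: monomial matrices with nonzero entries `±1` whose
product is `1` (row `k` carries the entry `ε k` in column `σ k`). -/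
def memD (n : ℕ) (M : Matrix (Fin n) (Fin n) ℝ) : Prop :=
  ∃ (σ : Equiv.Perm (Fin n)) (ε : Fin n → ℝ),
    (∀ i, ε i = 1 ∨ ε i = -1) ∧ (∏ i, ε i = 1) ∧
    ∀ k l, M k l = if σ k = l then ε k else 0

/-- The quasi-Coxeter element `w = (m, m-1, …, 2, 1̄)(n, n-1, …, m+1‾)` of `G(2,2,n)`. -/
def wQC (n m : ℕ) : Matrix (Fin n) (Fin n) ℝ :=
  Matrix.of fun k l =>
    if (k : ℕ) = 0 ∧ (l : ℕ) + 1 = m then -1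
    else if (k : ℕ) = m ∧ (l : ℕ) + 1 = n then -1
    else if (l : ℕ) + 1 = (k : ℕ) ∧ (k : ℕ) ≠ m then 1
    else 0

/-- The single marked cycle `(n, n-1, …, j+1, i, i-1, …, 1̄, m, m-1, …, i+1, j, j-1, …, m+1‾)`
of Equation (1), written as a monomial matrix. -/
def wCycleI (n m i j : ℕ) : Matrix (Fin n) (Fin n) ℝ :=
  Matrix.of fun k l =>
    if (k : ℕ) = 0 then (if (l : ℕ) + 1 = (if i = m then j else m) then -1 else 0)
    else if (k : ℕ) = m then (if (l : ℕ) + 1 = (if j = n then i else n) then -1 else 0)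
    else if (k : ℕ) < m then
      (if (l : ℕ) + 1 = (if (k : ℕ) = i then j else (k : ℕ)) then 1 else 0)
    else (if (l : ℕ) + 1 = (if (k : ℕ) = j then i else (k : ℕ)) then 1 else 0)

set_option maxHeartbeats 1000000

def FMat (n : ℕ) (f : ℕ → ℕ) (ε : ℕ → ℝ) : Matrix (Fin n) (Fin n) ℝ :=
  Matrix.of fun r c => if (c : ℕ) = f (r : ℕ) then ε (r : ℕ) else 0

lemma FMat_one (n : ℕ) : FMat n id (fun _ => 1) = 1 := by
  ext r c
  simp only [FMat, Matrix.of_apply, Matrix.one_apply, id, Fin.ext_iff]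
  split_ifs <;> first | rfl | omega

lemma FMat_mul (n : ℕ) (f g : ℕ → ℕ) (ε δ : ℕ → ℝ) (hf : ∀ r < n, f r < n) :
    FMat n f ε * FMat n g δ = FMat n (fun r => g (f r)) (fun r => ε r * δ (f r)) := by
  ext r c
  rw [Matrix.mul_apply]
  have hfr : f (r : ℕ) < n := hf _ r.isLt
  rw [Finset.sum_eq_single (⟨f (r : ℕ), hfr⟩ : Fin n)]
  · simp [FMat]
  · intro b _ hb
    simp only [FMat, Matrix.of_apply]
    rw [if_neg, zero_mul]
    intro hh
    exact hb (Fin.ext hh)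
  · intro h; exact absurd (Finset.mem_univ _) h

lemma FMat_mulVec (n : ℕ) (f : ℕ → ℕ) (ε : ℕ → ℝ) (hf : ∀ r < n, f r < n)
    (v : Fin n → ℝ) (r : Fin n) :
    (FMat n f ε).mulVec v r = ε (r : ℕ) * v ⟨f (r : ℕ), hf _ r.isLt⟩ := by
  rw [Matrix.mulVec, dotProduct]
  rw [Finset.sum_eq_single (⟨f (r : ℕ), hf _ r.isLt⟩ : Fin n)]
  · simp [FMat]
  · intro b _ hb
    simp only [FMat, Matrix.of_apply]
    rw [if_neg, zero_mul]
    intro hh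
    exact hb (Fin.ext hh)
  · intro h; exact absurd (Finset.mem_univ _) h

def swf (i j : ℕ) : ℕ → ℕ := fun r =>
  if r + 1 = i then j - 1 else if r + 1 = j then i - 1 else r

lemma reflMat_eq_FMat (n i j : ℕ) (ε : ℝ) (hi : 1 ≤ i) (hij : i < j) (hj : j ≤ n) :
    reflMat n i j ε = FMat n (swf i j) (fun r => if r + 1 = i ∨ r + 1 = j then ε else 1) := by
  ext r c
  have hr := r.isLt
  have hc := c.isLt
  simp only [reflMat, FMat, Matrix.of_apply, swf, Fin.ext_iff]
  split_ifs <;> first | rfl | omega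

lemma FMat_congr (n : ℕ) (f g : ℕ → ℕ) (ε δ : ℕ → ℝ)
    (hfg : ∀ r < n, f r = g r) (hed : ∀ r < n, ε r = δ r) :
    FMat n f ε = FMat n g δ := by
  ext r c
  simp only [FMat, Matrix.of_apply, hfg _ r.isLt, hed _ r.isLt]

def chain (n : ℕ) : List ℕ → List (Matrix (Fin n) (Fin n) ℝ)
  | a :: b :: t => reflMat n (a + 1) (b + 1) 1 :: chain n (b :: t)
  | _ => []

lemma chain_length (n : ℕ) : ∀ l : List ℕ, (chain n l).length = l.length - 1
  | [] => rfl
  | [_] => rfl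
  | a :: b :: t => by
      simp only [chain, List.length_cons, chain_length n (b :: t)]
      simp

lemma chain_mem (n : ℕ) (l : List ℕ) (hc : l.Chain' (· < ·)) (hlt : ∀ x ∈ l, x < n) :
    ∀ M ∈ chain n l, M ∈ ReflSet n := by
  induction l with
  | nil => simp [chain]
  | cons a t ih =>
    cases t with
    | nil => simp [chain]
    | cons b t' =>
      rw [List.Chain', List.isChain_cons_cons] at hc
      intro M hM
      simp only [chain, List.mem_cons] at hM
      rcases hM with rfl | hM
      · exact ⟨a + 1, b + 1, by omega, by omega, by
          have := hlt b (by simp); omega, Or.inl rfl⟩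
      · exact ih hc.2 (fun x hx => hlt x (List.mem_cons_of_mem a hx)) M hM

def pr : ℕ → List ℕ → ℕ → ℕ
  | _, [], k => k
  | p, b :: t, k => if k = b then p else pr b t k

def prevF : List ℕ → ℕ → ℕ
  | [], k => k
  | a :: t, k => if k = a then (a :: t).getLast (by simp) else pr a t k

lemma pr_not_mem (p : ℕ) (t : List ℕ) (k : ℕ) (h : k ∉ t) : pr p t k = k := by
  induction t generalizing p with
  | nil => rfl
  | cons b t' ih =>
    simp only [List.mem_cons, not_or] at h
    simp [pr, h.1, ih b h.2]

lemma prevF_not_mem (l : List ℕ) (k : ℕ) (h : k ∉ l) : prevF l k = k := by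
  cases l with
  | nil => rfl
  | cons a t =>
    simp only [List.mem_cons, not_or] at h
    simp [prevF, h.1, pr_not_mem a t k h.2]

lemma swf_succ (a b k : ℕ) :
    swf (a + 1) (b + 1) k = if k = a then b else if k = b then a else k := by
  simp only [swf, Nat.add_sub_cancel, Nat.add_right_cancel_iff]

lemma prevF_cons_cons (a b : ℕ) (t : List ℕ) (hab : a ≠ b) (hat : a ∉ t) (k : ℕ) :
    prevF (a :: b :: t) k = prevF (b :: t) (swf (a + 1) (b + 1) k) := by
  rw [swf_succ]
  by_cases hk : k = a
  · subst hk
    rw [if_pos rfl]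
    show (if k = k then (k :: b :: t).getLast (by simp) else _) = _
    rw [if_pos rfl]
    simp only [prevF, if_pos rfl]
    exact List.getLast_cons _
  · by_cases hk2 : k = b
    · rw [if_neg hk, if_pos hk2]
      show (if k = a then _ else pr a (b :: t) k) = if a = b then _ else pr b t a
      rw [if_neg hk, if_neg hab]
      simp only [pr, if_pos hk2]
      exact (pr_not_mem b t a hat).symm
    · rw [if_neg hk, if_neg hk2]
      show (if k = a then _ else pr a (b :: t) k) = if k = b then _ else pr b t k
      rw [if_neg hk, if_neg hk2]
      simp only [pr, if_neg hk2]

lemma pr_mem (p : ℕ) (t : List ℕ) (k : ℕ) (hk : k ∈ t) : pr p t k = p ∨ pr p t k ∈ t := by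
  induction t generalizing p with
  | nil => simp at hk
  | cons b t' ih =>
    simp only [pr]
    by_cases h : k = b
    · simp [h]
    · simp only [if_neg h]
      rcases List.mem_cons.mp hk with h' | h'
      · exact absurd h' h
      · rcases ih b h' with h2 | h2
        · right; simp [h2]
        · right; simp [h2]

lemma prevF_lt (l : List ℕ) (n : ℕ) (hl : ∀ x ∈ l, x < n) (k : ℕ) (hk : k < n) :
    prevF l k < n := by
  by_cases h : k ∈ l
  · cases l with
    | nil => exact absurd h (by simp)
    | cons a t =>
      simp only [prevF]
      by_cases hka : k = a
      · simp only [if_pos hka]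
        exact hl _ (List.getLast_mem _)
      · rw [if_neg hka]
        rcases List.mem_cons.mp h with h' | h'
        · exact absurd h' hka
        · rcases pr_mem a t k h' with h2 | h2
          · rw [h2]; exact hl a (by simp)
          · exact hl _ (List.mem_cons_of_mem a h2)
  · rw [prevF_not_mem l k h]; exact hk

lemma chain_prod (n : ℕ) (l : List ℕ) (hc : l.Chain' (· < ·)) (hlt : ∀ x ∈ l, x < n) :
    (chain n l).prod = FMat n (prevF l) (fun _ => 1) := by
  induction l with
  | nil =>
    simp only [chain, List.prod_nil]
    rw [show prevF [] = id from rfl, FMat_one]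
  | cons a t ih =>
    cases t with
    | nil =>
      simp only [chain, List.prod_nil]
      have : prevF [a] = id := by
        funext k
        simp only [prevF, pr, id]
        by_cases h : k = a <;> simp [h, List.getLast]
      rw [this, FMat_one]
    | cons b t' =>
      have ha : a < n := hlt a (by simp)
      have hb : b < n := hlt b (by simp)
      rw [List.Chain', List.isChain_cons_cons] at hc
      have hnd : a ∉ b :: t' := by
        have hp : (a :: b :: t').Pairwise (· < ·) :=
          List.isChain_iff_pairwise.mp (List.isChain_cons_cons.mpr hc)
        intro hmem
        exact absurd (List.rel_of_pairwise_cons hp hmem) (lt_irrefl a)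
      simp only [chain, List.prod_cons]
      rw [ih hc.2 (fun x hx => hlt x (List.mem_cons_of_mem a hx))]
      rw [reflMat_eq_FMat n (a+1) (b+1) 1 (by omega) (by have := hc.1; omega) (by omega)]
      rw [FMat_mul n _ _ _ _ (by
        intro r hr
        rw [swf_succ]
        split_ifs <;> omega)]
      apply FMat_congr
      · intro r _
        exact (prevF_cons_cons a b t' (by have := hc.1; omega) (by
          intro h; exact hnd (List.mem_cons_of_mem b h)) r).symm
      · intro r _
        simp


lemma pr_range' (p s r k : ℕ) :
    pr p (List.range' s r) k =
      if s ≤ k ∧ k < s + r then (if k = s then p else k - 1) else k := by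
  induction r generalizing s p with
  | zero =>
    simp only [List.range'_zero, pr]
    rw [if_neg (by omega)]
  | succ r ih =>
    rw [List.range'_succ]
    simp only [pr]
    by_cases hk : k = s
    · simp [hk]
    · rw [if_neg hk, ih]
      split_ifs <;> omega

lemma getLastD_cons' (a : ℕ) (t : List ℕ) (d : ℕ) : (a :: t).getLastD d = t.getLastD a := by
  cases t <;> simp [List.getLastD]

lemma getLastD_range' (s r d : ℕ) :
    (List.range' s r).getLastD d = if r = 0 then d else s + r - 1 := by
  induction r generalizing s d with
  | zero => simp
  | succ r ih =>
    rw [List.range'_succ, getLastD_cons', ih]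
    by_cases hr : r = 0
    · subst hr; simp
    · rw [if_neg hr, if_neg (by omega)]
      omega

lemma getLastD_append (u v : List ℕ) (d : ℕ) :
    (u ++ v).getLastD d = v.getLastD (u.getLastD d) := by
  induction u generalizing d with
  | nil => simp
  | cons b t ih => rw [List.cons_append, getLastD_cons', ih, getLastD_cons']

lemma getLast_eq_getLastD' (a : ℕ) (t : List ℕ) (h) : (a :: t).getLast h = t.getLastD a := by
  rw [List.getLast_eq_getLastD]

lemma pr_append (p : ℕ) (u v : List ℕ) (k : ℕ) :
    pr p (u ++ v) k = if k ∈ u then pr p u k else pr (u.getLastD p) v k := by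
  induction u generalizing p with
  | nil => simp [pr]
  | cons b t ih =>
    simp only [List.cons_append, pr, List.mem_cons, List.append_eq]
    by_cases hk : k = b
    · simp [hk, pr]
    · rw [if_neg hk, ih, getLastD_cons']
      by_cases hkt : k ∈ t
      · simp [hkt, pr, if_neg hk]
      · simp [hkt, hk]

lemma range'_cons (s r : ℕ) (hr : 0 < r) :
    List.range' s r = s :: List.range' (s + 1) (r - 1) := by
  obtain ⟨rr, rfl⟩ : ∃ rr, r = rr + 1 := ⟨r - 1, by omega⟩
  rw [List.range'_succ]
  simp

lemma prevF_range (m k : ℕ) (hm : 1 ≤ m) :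
    prevF (List.range m) k = if k = 0 then m - 1 else if k < m then k - 1 else k := by
  rw [List.range_eq_range', range'_cons 0 m hm]
  simp only [prevF]
  by_cases hk : k = 0
  · rw [if_pos hk, if_pos hk, getLast_eq_getLastD', getLastD_range']
    split_ifs <;> omega
  · rw [if_neg hk, if_neg hk, pr_range']
    split_ifs <;> omega

lemma prevF_range' (s r k : ℕ) (hr : 0 < r) :
    prevF (List.range' s r) k =
      if k = s then s + r - 1 else if s < k ∧ k < s + r then k - 1 else k := by
  rw [range'_cons s r hr]
  simp only [prevF]
  by_cases hk : k = s
  · rw [if_pos hk, if_pos hk, getLast_eq_getLastD', getLastD_range']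
    split_ifs <;> omega
  · rw [if_neg hk, if_neg hk, pr_range']
    split_ifs <;> omega

-- rank lemmas
lemma rank_add_le' {n : ℕ} (A B : Matrix (Fin n) (Fin n) ℝ) :
    (A + B).rank ≤ A.rank + B.rank := by
  have hle : LinearMap.range (A + B).mulVecLin ≤
      LinearMap.range A.mulVecLin ⊔ LinearMap.range B.mulVecLin := by
    rintro x ⟨v, rfl⟩
    rw [Matrix.mulVecLin_add]
    exact Submodule.add_mem_sup (LinearMap.mem_range_self _ v) (LinearMap.mem_range_self _ v)
  refine le_trans (Submodule.finrank_mono hle) ?_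
  exact Submodule.finrank_add_le_finrank_add_finrank _ _

lemma rank_refl_sub_one {n : ℕ} (M : Matrix (Fin n) (Fin n) ℝ) (hM : M ∈ ReflSet n) :
    (M - 1).rank ≤ 1 := by
  obtain ⟨i, j, hi, hij, hj, hM⟩ := hM
  have key : ∀ ε : ℝ, ε = 1 ∨ ε = -1 →
      reflMat n i j ε - 1 =
        Matrix.vecMulVec (fun k : Fin n => if (k:ℕ)+1 = i then 1 else if (k:ℕ)+1 = j then -ε else 0)
          (fun l : Fin n => if (l:ℕ)+1 = i then -1 else if (l:ℕ)+1 = j then ε else 0) := by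
    intro ε hε
    ext r c
    have hr := r.isLt
    have hc := c.isLt
    simp only [Matrix.sub_apply, Matrix.one_apply, reflMat, Matrix.of_apply,
      Matrix.vecMulVec_apply, Fin.ext_iff]
    rcases hε with rfl | rfl <;> split_ifs <;> first | omega | norm_num
  have hrk : ∀ ε : ℝ, ε = 1 ∨ ε = -1 → (reflMat n i j ε - 1).rank ≤ 1 := by
    intro ε hε
    rw [key ε hε, Matrix.vecMulVec_eq (Fin 1)]
    refine le_trans (Matrix.rank_mul_le_left _ _) ?_
    refine le_trans (Matrix.rank_le_card_width _) ?_
    simp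
  rcases hM with rfl | rfl
  · exact hrk 1 (Or.inl rfl)
  · exact hrk (-1) (Or.inr rfl)

lemma rank_prod_sub_one {n : ℕ} : ∀ L : List (Matrix (Fin n) (Fin n) ℝ),
    (∀ t ∈ L, t ∈ ReflSet n) → (L.prod - 1).rank ≤ L.length := by
  intro L
  induction L with
  | nil => intro _; simp
  | cons t L ih =>
    intro hL
    have h1 : (t * L.prod - 1) = t * (L.prod - 1) + (t - 1) := by
      rw [Matrix.mul_sub, mul_one]
      abel
    rw [List.prod_cons, h1]
    calc (t * (L.prod - 1) + (t - 1)).rank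
        ≤ (t * (L.prod - 1)).rank + (t - 1).rank := rank_add_le' _ _
      _ ≤ (L.prod - 1).rank + 1 := by
          gcongr
          · exact Matrix.rank_mul_le_right _ _
          · exact rank_refl_sub_one t (hL t (by simp))
      _ ≤ L.length + 1 := by
          have := ih (fun s hs => hL s (List.mem_cons_of_mem t hs))
          omega
      _ = (t :: L).length := by simp

lemma wQC_eq_FMat (n m : ℕ) (hm : 1 ≤ m) (hmn : m < n) :
    wQC n m = FMat n (fun k => if k = 0 then m - 1 else if k = m then n - 1 else k - 1)
      (fun k => if k = 0 ∨ k = m then -1 else 1) := by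
  ext r c
  have hr := r.isLt
  have hc := c.isLt
  simp only [wQC, FMat, Matrix.of_apply]
  split_ifs <;> first | rfl | omega

lemma wCycleI_eq_FMat (n m i j : ℕ) (hm : 1 ≤ m) (hi : 1 ≤ i) (him : i ≤ m)
    (hj : m + 1 ≤ j) (hjn : j ≤ n) :
    wCycleI n m i j = FMat n
      (fun k => if k = 0 then (if i = m then j - 1 else m - 1)
        else if k = m then (if j = n then i - 1 else n - 1)
        else if k < m then (if k = i then j - 1 else k - 1)
        else (if k = j then i - 1 else k - 1))
      (fun k => if k = 0 ∨ k = m then -1 else 1) := by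
  ext r c
  have hr := r.isLt
  have hc := c.isLt
  simp only [wCycleI, FMat, Matrix.of_apply]
  split_ifs <;> first | rfl | omega

lemma mem_range'_one (s r k : ℕ) : k ∈ List.range' s r ↔ s ≤ k ∧ k < s + r := by
  rw [List.mem_range']
  constructor
  · rintro ⟨t, ht, rfl⟩; omega
  · intro h; exact ⟨k - s, by omega⟩

lemma prevF_JA (n i j k : ℕ) (hi : 1 ≤ i) (hij : i < j) (hjn : j ≤ n) :
    prevF (List.range i ++ List.range' j (n - j)) k =
      if k = 0 then (if j = n then i - 1 else n - 1)
      else if k < i then k - 1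
      else if k = j ∧ j < n then i - 1
      else if j < k ∧ k < n then k - 1 else k := by
  rw [List.range_eq_range', range'_cons 0 i hi, List.cons_append]
  simp only [prevF]
  by_cases hk : k = 0
  · rw [if_pos hk, if_pos hk, getLast_eq_getLastD', getLastD_append,
      getLastD_range', getLastD_range']
    split_ifs <;> omega
  · rw [if_neg hk, if_neg hk, pr_append]
    by_cases hmem : k ∈ List.range' (0 + 1) (i - 1)
    · rw [if_pos hmem, pr_range']
      rw [mem_range'_one] at hmem
      split_ifs <;> omega
    · rw [if_neg hmem, pr_range', getLastD_range']
      rw [mem_range'_one] at hmem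
      split_ifs <;> omega

lemma chain_range_chain' (m : ℕ) : (List.range m).Chain' (· < ·) :=
  List.isChain_iff_pairwise.mpr (List.pairwise_lt_range (n := m))

lemma chain_range'_chain' (s r : ℕ) : (List.range' s r).Chain' (· < ·) :=
  List.isChain_iff_pairwise.mpr (List.pairwise_lt_range' (s := s) (n := r))

lemma swf_one (m k : ℕ) : swf 1 (m + 1) k = if k = 0 then m else if k = m then 0 else k := by
  simp only [swf]
  split_ifs <;> omega

lemma Lw_spec (n m : ℕ) (hm : 1 ≤ m) (hmn : m + 1 ≤ n) :
    ∃ L : List (Matrix (Fin n) (Fin n) ℝ),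
      L.length = n ∧ (∀ t ∈ L, t ∈ ReflSet n) ∧ L.prod = wQC n m := by
  refine ⟨reflMat n 1 (m+1) 1 :: reflMat n 1 (m+1) (-1) ::
      (chain n (List.range m) ++ chain n (List.range' m (n - m))), ?_, ?_, ?_⟩
  · simp [chain_length, List.length_range]
    omega
  · intro M hM
    simp only [List.mem_cons, List.mem_append] at hM
    rcases hM with rfl | rfl | hM | hM
    · exact ⟨1, m+1, le_refl 1, by omega, by omega, Or.inl rfl⟩
    · exact ⟨1, m+1, le_refl 1, by omega, by omega, Or.inr rfl⟩
    · exact chain_mem n _ (chain_range_chain' m)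
        (fun x hx => by simp at hx; omega) M hM
    · exact chain_mem n _ (chain_range'_chain' m (n-m))
        (fun x hx => by rw [mem_range'_one] at hx; omega) M hM
  · rw [List.prod_cons, List.prod_cons, List.prod_append,
      chain_prod n _ (chain_range_chain' m) (fun x hx => by simp at hx; omega),
      chain_prod n _ (chain_range'_chain' m (n-m))
        (fun x hx => by rw [mem_range'_one] at hx; omega),
      reflMat_eq_FMat n 1 (m+1) 1 (le_refl 1) (by omega) (by omega),
      reflMat_eq_FMat n 1 (m+1) (-1) (le_refl 1) (by omega) (by omega)]
    rw [FMat_mul n (prevF (List.range m)) (prevF (List.range' m (n-m))) _ _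
      (fun r hr => prevF_lt _ n (fun x hx => by simp at hx; omega) r hr)]
    rw [FMat_mul n (swf 1 (m+1)) _ _ _
      (fun r hr => by rw [swf_one]; split_ifs <;> omega)]
    rw [FMat_mul n (swf 1 (m+1)) _ _ _
      (fun r hr => by rw [swf_one]; split_ifs <;> omega)]
    rw [wQC_eq_FMat n m hm (by omega)]
    apply FMat_congr
    · intro r hr
      rw [swf_one, swf_one, prevF_range m _ hm, prevF_range' m (n-m) _ (by omega)]
      split_ifs <;> omega
    · intro r hr
      rw [swf_one]
      split_ifs <;> first | omega | norm_num

lemma Lwt_spec (n m i j : ℕ) (hn : 4 ≤ n) (hm : 1 ≤ m) (hmn : m + 1 ≤ n) (hi : 1 ≤ i)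
    (him : i ≤ m) (hj : m + 1 ≤ j) (hjn : j ≤ n) :
    ∃ L : List (Matrix (Fin n) (Fin n) ℝ),
      L.length = n - 1 ∧ (∀ t ∈ L, t ∈ ReflSet n) ∧ L.prod = wCycleI n m i j := by
  have hJA_chain : (List.range i ++ List.range' j (n - j)).Chain' (· < ·) := by
    apply List.isChain_iff_pairwise.mpr
    rw [List.pairwise_append]
    exact ⟨List.pairwise_lt_range (n := i), List.pairwise_lt_range' (s := j) (n := n-j),
      fun x hx y hy => by simp at hx; rw [mem_range'_one] at hy; omega⟩
  have hJA_lt : ∀ x ∈ List.range i ++ List.range' j (n - j), x < n := by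
    intro x hx
    rcases List.mem_append.mp hx with hx | hx
    · simp at hx; omega
    · rw [mem_range'_one] at hx; omega
  have hJB_lt : ∀ x ∈ List.range' i (j - i), x < n := by
    intro x hx; rw [mem_range'_one] at hx; omega
  refine ⟨reflMat n 1 (m+1) (-1) ::
      (chain n (List.range i ++ List.range' j (n - j)) ++ chain n (List.range' i (j - i))),
      ?_, ?_, ?_⟩
  · simp [chain_length, List.length_range]
    omega
  · intro M hM
    simp only [List.mem_cons, List.mem_append] at hM
    rcases hM with rfl | hM | hM
    · exact ⟨1, m+1, le_refl 1, by omega, by omega, Or.inr rfl⟩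
    · exact chain_mem n _ hJA_chain hJA_lt M hM
    · exact chain_mem n _ (chain_range'_chain' i (j-i)) hJB_lt M hM
  · rw [List.prod_cons, List.prod_append,
      chain_prod n _ hJA_chain hJA_lt,
      chain_prod n _ (chain_range'_chain' i (j-i)) hJB_lt,
      reflMat_eq_FMat n 1 (m+1) (-1) (le_refl 1) (by omega) (by omega)]
    rw [FMat_mul n (prevF (List.range i ++ List.range' j (n - j)))
        (prevF (List.range' i (j - i))) _ _
        (fun r hr => prevF_lt _ n hJA_lt r hr)]
    rw [FMat_mul n (swf 1 (m+1)) _ _ _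
      (fun r hr => by rw [swf_one]; split_ifs <;> omega)]
    rw [wCycleI_eq_FMat n m i j hm hi him hj hjn]
    apply FMat_congr
    · intro r hr
      rw [swf_one, prevF_JA n i j _ hi (by omega) hjn,
        prevF_range' i (j - i) _ (by omega)]
      split_ifs <;> omega
    · intro r hr
      split_ifs <;> first | omega | norm_num

lemma refl_sq (n i j : ℕ) (hi : 1 ≤ i) (hij : i < j) (hjn : j ≤ n) :
    reflMat n i j 1 * reflMat n i j 1 = 1 := by
  rw [reflMat_eq_FMat n i j 1 hi hij hjn,
    FMat_mul n (swf i j) (swf i j) _ _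
      (fun r hr => by simp only [swf]; split_ifs <;> omega),
    ← FMat_one n]
  apply FMat_congr
  · intro r hr
    simp only [swf, id]
    split_ifs <;> omega
  · intro r hr
    split_ifs <;> norm_num

lemma wQC_mul_t (n m i j : ℕ) (hn : 4 ≤ n) (hm : 1 ≤ m) (hmn : m + 1 ≤ n) (hi : 1 ≤ i)
    (him : i ≤ m) (hj : m + 1 ≤ j) (hjn : j ≤ n) :
    wQC n m * reflMat n i j 1 = wCycleI n m i j := by
  rw [wQC_eq_FMat n m hm (by omega),
    reflMat_eq_FMat n i j 1 hi (by omega) hjn,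
    FMat_mul n _ (swf i j) _ _ (fun r hr => by split_ifs <;> omega),
    wCycleI_eq_FMat n m i j hm hi him hj hjn]
  apply FMat_congr
  · intro r hr
    simp only [swf]
    split_ifs <;> omega
  · intro r hr
    split_ifs <;> first | omega | norm_num

lemma rank_wQC (n m : ℕ) (hm : 1 ≤ m) (hmn : m + 1 ≤ n) :
    (wQC n m - 1).rank = n := by
  have hfw : ∀ r < n, (fun k => if k = 0 then m - 1 else if k = m then n - 1 else k - 1) r < n :=
    fun r hr => by dsimp only; split_ifs <;> omega
  have hinj : LinearMap.ker (wQC n m - 1).mulVecLin = ⊥ := by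
    rw [LinearMap.ker_eq_bot']
    intro v hv
    rw [Matrix.mulVecLin_apply, Matrix.sub_mulVec, Matrix.one_mulVec, sub_eq_zero] at hv
    set u : ℕ → ℝ := fun t => if h : t < n then v ⟨t, h⟩ else 0 with hu
    have key : ∀ t, (ht : t < n) →
        u t = (if t = 0 ∨ t = m then (-1:ℝ) else 1) *
          u (if t = 0 then m - 1 else if t = m then n - 1 else t - 1) := by
      intro t ht
      have := congrFun hv ⟨t, ht⟩
      rw [wQC_eq_FMat n m hm (by omega), FMat_mulVec n _ _ hfw v ⟨t, ht⟩] at this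
      simp only [hu]
      rw [dif_pos ht, dif_pos (hfw t ht)]
      exact this.symm
    have h1 : ∀ t, t < m → u t = u 0 := by
      intro t
      induction t with
      | zero => intro _; rfl
      | succ t ih =>
        intro ht
        have hk := key (t+1) (by omega)
        rw [if_neg (by omega), if_neg (by omega), if_neg (by omega)] at hk
        simp only [Nat.add_sub_cancel] at hk
        rw [hk, one_mul, ih (by omega)]
    have h0 : u 0 = 0 := by
      have hk := key 0 (by omega)
      rw [if_pos (Or.inl rfl), if_pos rfl] at hk
      rw [h1 (m-1) (by omega)] at hk
      linarith
    have h2 : ∀ d, d < n - m → u (m + d) = u m := by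
      intro d
      induction d with
      | zero => intro _; rfl
      | succ d ih =>
        intro hd
        have hk := key (m + d + 1) (by omega)
        rw [if_neg (by omega), if_neg (by omega), if_neg (by omega)] at hk
        simp only [Nat.add_sub_cancel] at hk
        rw [show m + (d + 1) = m + d + 1 by omega, hk, one_mul, ih (by omega)]
    have hm0 : u m = 0 := by
      have hk := key m (by omega)
      rw [if_pos (Or.inr rfl), if_neg (by omega), if_pos rfl] at hk
      have := h2 (n - m - 1) (by omega)
      rw [show m + (n - m - 1) = n - 1 by omega] at this
      rw [this] at hk
      linarith
    funext r
    have hr := r.isLt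
    have : u (r : ℕ) = 0 := by
      by_cases hlt : (r : ℕ) < m
      · rw [h1 _ hlt, h0]
      · have := h2 ((r : ℕ) - m) (by omega)
        rw [show m + ((r:ℕ) - m) = (r:ℕ) by omega] at this
        rw [this, hm0]
      
    simp only [hu] at this
    rw [dif_pos hr] at this
    simpa using this
  have := LinearMap.finrank_range_add_finrank_ker (wQC n m - 1).mulVecLin
  rw [hinj, finrank_bot] at this
  simp only [Matrix.rank]
  simp only [Module.finrank_fintype_fun_eq_card, Fintype.card_fin] at this
  omega


/-- For the transposition `t = (i,j)` with `1 ≤ i ≤ m < j ≤ n`, the product `w · t` is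
represented by the single cycle of Equation (1); in particular
`ℓ_T(w·t) = n - 1 = ℓ_T(w) - 1`. -/
theorem quasiCoxeter_mul_transposition (n m i j : ℕ) (hn : 4 ≤ n) (hm : 1 ≤ m)
    (hm2 : m ≤ n / 2) (hi : 1 ≤ i) (him : i ≤ m) (hj : m + 1 ≤ j) (hjn : j ≤ n) :
    wQC n m * reflMat n i j 1 = wCycleI n m i j ∧
    reflLen n (wQC n m * reflMat n i j 1) = n - 1 ∧
    reflLen n (wQC n m) = n := by
  have hmn : m + 1 ≤ n := by omega
  have hprod : wQC n m * reflMat n i j 1 = wCycleI n m i j :=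
    wQC_mul_t n m i j hn hm hmn hi him hj hjn
  have hrk : (wQC n m - 1).rank = n := rank_wQC n m hm hmn
  refine ⟨hprod, ?_, ?_⟩
  · obtain ⟨L, hlen, hmem, hLprod⟩ := Lwt_spec n m i j hn hm hmn hi him hj hjn
    rw [hprod]
    unfold reflLen
    have hrk2 : n - 1 ≤ (wCycleI n m i j - 1).rank := by
      have hts : reflMat n i j 1 * reflMat n i j 1 = 1 :=
        refl_sq n i j hi (by omega) hjn
      have hid : wQC n m - 1 =
          (wCycleI n m i j) * (reflMat n i j 1 - 1) + (wCycleI n m i j - 1) := by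
        have h2 : wCycleI n m i j * reflMat n i j 1 = wQC n m := by
          rw [← hprod, Matrix.mul_assoc, hts, mul_one]
        rw [Matrix.mul_sub, h2, mul_one]
        abel
      have hr1 : ((wCycleI n m i j) * (reflMat n i j 1 - 1)).rank ≤ 1 := by
        refine le_trans (Matrix.rank_mul_le_right _ _) ?_
        exact rank_refl_sub_one _ ⟨i, j, hi, by omega, hjn, Or.inl rfl⟩
      have := rank_add_le' ((wCycleI n m i j) * (reflMat n i j 1 - 1))
        (wCycleI n m i j - 1)
      rw [← hid, hrk] at this
      omega
    have hmem1 : (n - 1) ∈ {k : ℕ | ∃ L : List (Matrix (Fin n) (Fin n) ℝ),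
        L.length = k ∧ (∀ t ∈ L, t ∈ ReflSet n) ∧ L.prod = wCycleI n m i j} :=
      ⟨L, hlen, hmem, hLprod⟩
    apply le_antisymm
    · exact Nat.sInf_le hmem1
    · apply le_csInf ⟨n - 1, hmem1⟩
      rintro k ⟨L', hlen', hmem', hprod'⟩
      have := rank_prod_sub_one L' hmem'
      rw [hprod'] at this
      omega
  · obtain ⟨L, hlen, hmem, hLprod⟩ := Lw_spec n m hm hmn
    unfold reflLen
    have hmem1 : n ∈ {k : ℕ | ∃ L : List (Matrix (Fin n) (Fin n) ℝ),
        L.length = k ∧ (∀ t ∈ L, t ∈ ReflSet n) ∧ L.prod = wQC n m} :=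
      ⟨L, hlen, hmem, hLprod⟩
    apply le_antisymm
    · exact Nat.sInf_le hmem1
    · apply le_csInf ⟨n, hmem1⟩
      rintro k ⟨L', hlen', hmem', hprod'⟩
      have := rank_prod_sub_one L' hmem'
      rw [hprod', hrk, hlen'] at this
      exact this
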